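/- arXiv:2111.08843 — 2 statements merged into one kernel-verified Lean document; each statement's English description precedes it below -/
import Mathlib

section
/- For all i, j ∈ [0, N−1], the Hamming weight of the sum (over F_2) of the i-th and j-th rows of the polar transform satisfies w(g_i ⊕ g_j) = 2^{|S_i|} + 2^{|S_j|} − 2·2^{|S_i ∩ S_j|}. -/
noncomputable section
open scoped Classical
open Finset

/-- The 2×2 binary matrix [[1,0],[1,1]], as an ℕ-indexed function (zero outside range). -/
def G2 (a b : ℕ) : ZMod 2 :=
  if a = 0 ∧ b = 0 then 1
  else if a = 1 ∧ b = 0 then 1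
  else if a = 1 ∧ b = 1 then 1
  else 0

/-- `G n i c` is the (i,c) entry of the n-th Kronecker power over F₂ of [[1,0],[1,1]],
for row/column indices i, c ∈ [0, 2^n − 1] (standard row-major index flattening). -/
def G : ℕ → ℕ → ℕ → ZMod 2
  | 0 => fun i c => if i = 0 ∧ c = 0 then 1 else 0
  | n + 1 => fun i c => G2 (i / 2 ^ n) (c / 2 ^ n) * G n (i % 2 ^ n) (c % 2 ^ n)

/-- Row i of the polar transform G_N (N = 2^n), as a vector of its coordinates. -/
def g (n i : ℕ) : ℕ → ZMod 2 := fun c => G n i c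

/-- S_i ⊆ [0, n−1]: the support of the binary representation of i. -/
def S (n i : ℕ) : Finset ℕ := (Finset.range n).filter fun a => i.testBit a

/-- T_i = [0, n−1] \ S_i. -/
def T (n i : ℕ) : Finset ℕ := Finset.range n \ S n i

/-- Hamming weight of a vector whose coordinates are indexed by [0, 2^n − 1]. -/
def wt (n : ℕ) (v : ℕ → ZMod 2) : ℕ :=
  ((Finset.range (2 ^ n)).filter fun c => v c ≠ 0).card

/-- The index in [0, 2^n − 1] whose binary support is the set U ⊆ [0, n−1]. -/
def idx (U : Finset ℕ) : ℕ := ∑ a ∈ U, 2 ^ a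

/-- K_i = {j ∈ [i+1, N−1] : w(g_j) ≥ w(g_i ⊕ g_j) and w(g_i ⊕ g_j) = w(g_i)}. -/
def K (n i : ℕ) : Finset ℕ :=
  (Finset.Ico (i + 1) (2 ^ n)).filter fun j =>
    wt n (g n i + g n j) ≤ wt n (g n j) ∧ wt n (g n i + g n j) = wt n (g n i)

/-- One generating step of the partial order on [0, 2^n − 1]. -/
def poStep (n i j : ℕ) : Prop :=
  i < 2 ^ n ∧ j < 2 ^ n ∧
    (S n i ⊆ S n j ∨
      ∃ a b, a ∈ S n i ∧ b ∉ S n i ∧ a < b ∧ S n j = insert b (S n i \ {a}))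

/-- The partial order ⪯: reflexive–transitive closure of the generating relation. -/
def po (n : ℕ) : ℕ → ℕ → Prop := Relation.ReflTransGen (poStep n)

/-- Partial Order Property of an information set I ⊆ [0, 2^n − 1]. -/
def POP (n : ℕ) (I : Finset ℕ) : Prop :=
  ∀ i ∈ I, ∀ j, j < 2 ^ n → po n i j → j ∈ I

/-- The code C(I): all F₂-linear combinations (i.e. subset sums) of the rows g_i, i ∈ I. -/
def codewords (n : ℕ) (I : Finset ℕ) : Finset (ℕ → ZMod 2) :=
  I.powerset.image fun H => ∑ h ∈ H, g n h

/-- A_w(I): the number of codewords of C(I) of Hamming weight w. -/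
def A (n : ℕ) (I : Finset ℕ) (w : ℕ) : ℕ :=
  ((codewords n I).filter fun v => wt n v = w).card

/-- The coset C_i(I) = {g_i ⊕ ⊕_{h∈H} g_h : H ⊆ I \ [0,i]}. -/
def coset (n : ℕ) (I : Finset ℕ) (i : ℕ) : Finset (ℕ → ZMod 2) :=
  ((I.filter fun h => i < h).powerset).image fun H => g n i + ∑ h ∈ H, g n h

/-- A_{i,w}(I): the number of vectors of Hamming weight w in the coset C_i(I). -/
def Ai (n : ℕ) (I : Finset ℕ) (i w : ℕ) : ℕ :=
  ((coset n I i).filter fun v => wt n v = w).card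

-- aux lemmas
lemma mem_S {n i a : ℕ} : a ∈ S n i ↔ a < n ∧ i.testBit a := by
  simp [S]

lemma S_subset_range (n i : ℕ) : S n i ⊆ Finset.range n := filter_subset _ _

lemma notMem_S_self (n x : ℕ) : n ∉ S n x := by simp [mem_S]

lemma S_mod (n x : ℕ) : S n (x % 2 ^ n) = S n x := by
  ext a
  simp [mem_S, Nat.testBit_mod_two_pow]

lemma S_succ (n x : ℕ) :
    S (n + 1) x = if x.testBit n then insert n (S n x) else S n x := by
  by_cases h : x.testBit n
  · rw [if_pos h]
    ext a
    simp only [mem_S, Finset.mem_insert]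
    constructor
    · rintro ⟨h1, h2⟩
      rcases Nat.lt_succ_iff_lt_or_eq.1 h1 with h3 | h3
      · exact Or.inr ⟨h3, h2⟩
      · exact Or.inl h3
    · rintro (rfl | ⟨h1, h2⟩)
      · exact ⟨Nat.lt_succ_self _, h⟩
      · exact ⟨Nat.lt_succ_of_lt h1, h2⟩
  · rw [if_neg h]
    ext a
    simp only [mem_S]
    constructor
    · rintro ⟨h1, h2⟩
      rcases Nat.lt_succ_iff_lt_or_eq.1 h1 with h3 | h3
      · exact ⟨h3, h2⟩
      · exact absurd (h3 ▸ h2) h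
    · rintro ⟨h1, h2⟩
      exact ⟨Nat.lt_succ_of_lt h1, h2⟩

lemma testBit_div {n x : ℕ} (hx : x < 2 ^ (n + 1)) :
    (x.testBit n = true ↔ x / 2 ^ n = 1) ∧ (x.testBit n = false ↔ x / 2 ^ n = 0) := by
  have h2 : x / 2 ^ n < 2 := by
    apply Nat.div_lt_of_lt_mul
    rw [pow_succ] at hx; omega
  rw [Nat.testBit_eq_decide_div_mod_eq]
  interval_cases h : x / 2 ^ n <;> simp

lemma G_eq : ∀ n i c, i < 2 ^ n → c < 2 ^ n →
    G n i c = if S n c ⊆ S n i then 1 else 0 := by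
  intro n
  induction n with
  | zero =>
    intro i c hi hc
    interval_cases i
    interval_cases c
    simp [G, S]
  | succ n ih =>
    intro i c hi hc
    have hri : i % 2 ^ n < 2 ^ n := Nat.mod_lt _ (by positivity)
    have hrc : c % 2 ^ n < 2 ^ n := Nat.mod_lt _ (by positivity)
    have hni : n ∉ S n i := notMem_S_self _ _
    have hnc : n ∉ S n c := notMem_S_self _ _
    have hG : G (n + 1) i c = G2 (i / 2 ^ n) (c / 2 ^ n) * G n (i % 2 ^ n) (c % 2 ^ n) := rfl
    rw [hG, ih _ _ hri hrc, S_mod, S_mod, S_succ n i, S_succ n c]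
    by_cases hbi : i.testBit n = true <;> by_cases hbc : c.testBit n = true
    · rw [if_pos hbi, if_pos hbc, ((testBit_div hi).1).1 hbi, ((testBit_div hc).1).1 hbc]
      have hiff : insert n (S n c) ⊆ insert n (S n i) ↔ S n c ⊆ S n i := by
        constructor
        · intro h a ha
          rcases Finset.mem_insert.1 (h (Finset.mem_insert_of_mem ha)) with h1 | h1
          · exact absurd (h1 ▸ ha) hnc
          · exact h1
        · intro h
          exact Finset.insert_subset_insert _ h
      rw [if_congr hiff rfl rfl]
      by_cases h : S n c ⊆ S n i <;> simp [h, G2]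
    · rw [if_pos hbi, if_neg hbc, ((testBit_div hi).1).1 hbi,
        ((testBit_div hc).2).1 (Bool.not_eq_true _ ▸ hbc)]
      have hiff : S n c ⊆ insert n (S n i) ↔ S n c ⊆ S n i := by
        constructor
        · intro h a ha
          rcases Finset.mem_insert.1 (h ha) with h1 | h1
          · exact absurd (h1 ▸ ha) hnc
          · exact h1
        · intro h
          exact h.trans (Finset.subset_insert _ _)
      rw [if_congr hiff rfl rfl]
      by_cases h : S n c ⊆ S n i <;> simp [h, G2]
    · rw [if_neg hbi, if_pos hbc, ((testBit_div hi).2).1 (Bool.not_eq_true _ ▸ hbi),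
        ((testBit_div hc).1).1 hbc]
      have hiff : ¬ (insert n (S n c) ⊆ S n i) := by
        intro h
        exact hni (h (Finset.mem_insert_self _ _))
      rw [if_neg hiff]
      by_cases h : S n c ⊆ S n i <;> simp [h, G2]
    · rw [if_neg hbi, if_neg hbc, ((testBit_div hi).2).1 (Bool.not_eq_true _ ▸ hbi),
        ((testBit_div hc).2).1 (Bool.not_eq_true _ ▸ hbc)]
      by_cases h : S n c ⊆ S n i <;> simp [h, G2]

lemma S_inj {n c c' : ℕ} (hc : c < 2 ^ n) (hc' : c' < 2 ^ n) (h : S n c = S n c') : c = c' := by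
  apply Nat.eq_of_testBit_eq
  intro a
  by_cases ha : a < n
  · have := Finset.ext_iff.1 h a
    simp only [mem_S, ha, true_and] at this
    by_cases h1 : c.testBit a <;> by_cases h2 : c'.testBit a <;> simp_all
  · rw [Nat.testBit_eq_false_of_lt (lt_of_lt_of_le hc (Nat.pow_le_pow_right (by norm_num) (by omega))),
      Nat.testBit_eq_false_of_lt (lt_of_lt_of_le hc' (Nat.pow_le_pow_right (by norm_num) (by omega)))]

lemma image_S (n : ℕ) : (Finset.range (2 ^ n)).image (S n) = (Finset.range n).powerset := by
  apply Finset.eq_of_subset_of_card_le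
  · intro V hV
    rcases Finset.mem_image.1 hV with ⟨c, _, rfl⟩
    exact Finset.mem_powerset.2 (S_subset_range _ _)
  · rw [Finset.card_powerset, Finset.card_range,
      Finset.card_image_of_injOn (fun c hc c' hc' h =>
        S_inj (Finset.mem_range.1 hc) (Finset.mem_range.1 hc') h),
      Finset.card_range]

lemma count_subsets (n : ℕ) (U : Finset ℕ) (hU : U ⊆ Finset.range n) :
    ((Finset.range (2 ^ n)).filter fun c => S n c ⊆ U).card = 2 ^ U.card := by
  rw [← Finset.card_powerset]
  apply Finset.card_bij (fun c _ => S n c)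
  · intro c hc
    exact Finset.mem_powerset.2 (Finset.mem_filter.1 hc).2
  · intro c hc c' hc' h
    exact S_inj (Finset.mem_range.1 (Finset.mem_filter.1 hc).1)
      (Finset.mem_range.1 (Finset.mem_filter.1 hc').1) h
  · intro V hV
    have : V ∈ (Finset.range (2 ^ n)).image (S n) := by
      rw [image_S]
      exact Finset.mem_powerset.2 ((Finset.mem_powerset.1 hV).trans hU)
    rcases Finset.mem_image.1 this with ⟨c, hc, rfl⟩
    exact ⟨c, Finset.mem_filter.2 ⟨hc, Finset.mem_powerset.1 hV⟩, rfl⟩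

/-- w(g_i ⊕ g_j) = 2^{|S_i|} + 2^{|S_j|} − 2·2^{|S_i ∩ S_j|}. -/
theorem two_rows_weight (n : ℕ) (hn : 1 ≤ n) (i j : ℕ) (hi : i < 2 ^ n) (hj : j < 2 ^ n) :
    wt n (g n i + g n j) =
      2 ^ (S n i).card + 2 ^ (S n j).card - 2 * 2 ^ (S n i ∩ S n j).card := by
  classical
  set P : Finset ℕ := (Finset.range (2 ^ n)).filter fun c => S n c ⊆ S n i with hP
  set Q : Finset ℕ := (Finset.range (2 ^ n)).filter fun c => S n c ⊆ S n j with hQ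
  have hset : ((Finset.range (2 ^ n)).filter fun c => (g n i + g n j) c ≠ 0)
      = (P \ Q) ∪ (Q \ P) := by
    ext c
    simp only [Finset.mem_filter, Finset.mem_union, Finset.mem_sdiff, hP, hQ]
    constructor
    · rintro ⟨hc, hne⟩
      have hcr := Finset.mem_range.1 hc
      rw [Pi.add_apply] at hne
      have hgi : g n i c = if S n c ⊆ S n i then 1 else 0 := G_eq n i c hi hcr
      have hgj : g n j c = if S n c ⊆ S n j then 1 else 0 := G_eq n j c hj hcr
      rw [hgi, hgj] at hne
      by_cases h1 : S n c ⊆ S n i <;> by_cases h2 : S n c ⊆ S n j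
      · rw [if_pos h1, if_pos h2] at hne
        exact absurd (by decide) hne
      · exact Or.inl ⟨⟨hc, h1⟩, fun hmem => h2 hmem.2⟩
      · exact Or.inr ⟨⟨hc, h2⟩, fun hmem => h1 hmem.2⟩
      · rw [if_neg h1, if_neg h2] at hne
        exact absurd (by decide) hne
    · have hg' : ∀ k, k < 2 ^ n → ∀ c, c < 2 ^ n →
          (g n k : ℕ → ZMod 2) c = if S n c ⊆ S n k then 1 else 0 := by
        intro k hk c hcr
        exact G_eq n k c hk hcr
      rintro (⟨⟨hc, h1⟩, h2⟩ | ⟨⟨hc, h1⟩, h2⟩) <;>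
      · have hcr := Finset.mem_range.1 hc
        refine ⟨hc, ?_⟩
        rw [Pi.add_apply, hg' i hi c hcr, hg' j hj c hcr]
        simp only [Finset.mem_filter, not_and] at h2
        have h2' := h2 hc
        simp only [h1, h2', if_true, if_false]
        decide
  have hPQ : P ∩ Q = (Finset.range (2 ^ n)).filter fun c => S n c ⊆ S n i ∩ S n j := by
    rw [hP, hQ, ← Finset.filter_and]
    apply Finset.filter_congr
    intro c _
    exact (Finset.subset_inter_iff).symm
  have hcardP : P.card = 2 ^ (S n i).card := count_subsets n _ (S_subset_range n i)
  have hcardQ : Q.card = 2 ^ (S n j).card := count_subsets n _ (S_subset_range n j)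
  have hcardPQ : (P ∩ Q).card = 2 ^ (S n i ∩ S n j).card := by
    rw [hPQ]
    exact count_subsets n _ ((Finset.inter_subset_left).trans (S_subset_range n i))
  have hdisj : Disjoint (P \ Q) (Q \ P) :=
    Finset.disjoint_left.2 fun a ha hb => (Finset.mem_sdiff.1 hb).2 (Finset.mem_sdiff.1 ha).1
  have h1 : (P \ Q).card = P.card - (P ∩ Q).card := by
    rw [← Finset.sdiff_inter_self_left P Q]
    exact Finset.card_sdiff_of_subset (Finset.inter_subset_left)
  have h2 : (Q \ P).card = Q.card - (P ∩ Q).card := by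
    rw [Finset.inter_comm, ← Finset.sdiff_inter_self_left Q P]
    exact Finset.card_sdiff_of_subset (Finset.inter_subset_left)
  have hle1 : (P ∩ Q).card ≤ P.card := Finset.card_le_card (Finset.inter_subset_left)
  have hle2 : (P ∩ Q).card ≤ Q.card := Finset.card_le_card (Finset.inter_subset_right)
  rw [wt, hset, Finset.card_union_of_disjoint hdisj, h1, h2, hcardP, hcardQ, hcardPQ] at *
  omega
end
end

section
/- For every i ∈ [0, N−1] and every subset H ⊆ [i+1, N−1], the Hamming weight of the codeword g_i ⊕ ⊕_{h∈H} g_h (sum over F_2) is at least w(g_i) = 2^{|S_i|}. -/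
noncomputable section
open scoped Classical
open Finset

lemma wt_congr {n : ℕ} {u v : ℕ → ZMod 2} (h : ∀ c < 2^n, u c = v c) : wt n u = wt n v := by
  unfold wt
  congr 1
  apply Finset.filter_congr
  intro c hc
  rw [Finset.mem_range] at hc
  rw [h c hc]
lemma wt_eq_sum (n : ℕ) (v : ℕ → ZMod 2) :
    wt n v = ∑ c ∈ Finset.range (2^n), (if v c ≠ 0 then 1 else 0) := by
  unfold wt
  rw [Finset.card_filter]
lemma wt_split (n : ℕ) (v : ℕ → ZMod 2) :
    wt (n+1) v = wt n (fun c => v c) + wt n (fun c => v (2^n + c)) := by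
  rw [wt_eq_sum, wt_eq_sum, wt_eq_sum, pow_succ, mul_two, Finset.sum_range_add]
lemma g_succ_low {n i c : ℕ} (hi : i < 2^n) (hc : c < 2^n) : g (n+1) i c = g n i c := by
  simp [g, G, Nat.div_eq_of_lt hi, Nat.div_eq_of_lt hc, Nat.mod_eq_of_lt hi, Nat.mod_eq_of_lt hc, G2]
lemma wt_triangle (n : ℕ) (u x : ℕ → ZMod 2) : wt n u ≤ wt n (u + x) + wt n x := by
  unfold wt
  refine le_trans (Finset.card_le_card ?_) (Finset.card_union_le _ _)
  intro c hc
  simp only [Finset.mem_filter, Finset.mem_union, Finset.mem_range] at *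
  by_contra hcon
  push_neg at hcon
  have h1 : u c + x c = 0 := hcon.1 hc.1
  have h2 := hcon.2 hc.1
  rw [h2, add_zero] at h1
  exact hc.2 h1

lemma div_high {n i : ℕ} (h1 : 2^n ≤ i) (h2 : i < 2^(n+1)) : i / 2^n = 1 := by
  have : i = 2^n + (i - 2^n) := by omega
  rw [this, add_comm, Nat.add_div_right _ (Nat.two_pow_pos n),
    Nat.div_eq_of_lt (by rw [pow_succ] at h2; omega)]

lemma mod_high {n i : ℕ} (h1 : 2^n ≤ i) (h2 : i < 2^(n+1)) : i % 2^n = i - 2^n := by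
  have h3 : i - 2^n < 2^n := by rw [pow_succ] at h2; omega
  conv_lhs => rw [show i = (i - 2^n) + 2^n by omega]
  rw [Nat.add_mod_right, Nat.mod_eq_of_lt h3]

lemma g_succ_low_high {n i c : ℕ} (hi : i < 2^n) (hc : c < 2^n) : g (n+1) i (2^n + c) = 0 := by
  have hd : (2^n + c) / 2^n = 1 := div_high (by omega) (by rw [pow_succ]; omega)
  simp [g, G, Nat.div_eq_of_lt hi, hd, G2]

lemma g_succ_high_low {n i c : ℕ} (h1 : 2^n ≤ i) (h2 : i < 2^(n+1)) (hc : c < 2^n) :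
    g (n+1) i c = g n (i - 2^n) c := by
  simp [g, G, div_high h1 h2, mod_high h1 h2, Nat.div_eq_of_lt hc, Nat.mod_eq_of_lt hc, G2]

lemma g_succ_high_high {n i c : ℕ} (h1 : 2^n ≤ i) (h2 : i < 2^(n+1)) (hc : c < 2^n) :
    g (n+1) i (2^n + c) = g n (i - 2^n) c := by
  have hd : (2^n + c) / 2^n = 1 := div_high (by omega) (by rw [pow_succ]; omega)
  have hm : (2^n + c) % 2^n = c := by
    rw [mod_high (by omega) (by rw [pow_succ]; omega)]; omega
  simp [g, G, div_high h1 h2, mod_high h1 h2, hd, hm, G2]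

lemma S_low {n i : ℕ} (hi : i < 2^n) : S (n+1) i = S n i := by
  unfold S
  ext a
  simp only [Finset.mem_filter, Finset.mem_range]
  constructor
  · rintro ⟨ha, hb⟩
    refine ⟨?_, hb⟩
    by_contra h
    have : a ≥ n := by omega
    have : i < 2^a := lt_of_lt_of_le hi (Nat.pow_le_pow_right (by norm_num) this)
    rw [Nat.testBit_lt_two_pow this] at hb
    exact Bool.false_ne_true hb
  · rintro ⟨ha, hb⟩; exact ⟨by omega, hb⟩

lemma S_high {n i : ℕ} (h1 : 2^n ≤ i) (h2 : i < 2^(n+1)) :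
    (S (n+1) i).card = (S n (i - 2^n)).card + 1 := by
  have hi' : i - 2^n < 2^n := by rw [pow_succ] at h2; omega
  have hrep : i = 2^n + (i - 2^n) := by omega
  have hins : S (n+1) i = insert n (S n (i - 2^n)) := by
    unfold S
    ext a
    simp only [Finset.mem_insert, Finset.mem_filter, Finset.mem_range]
    rcases lt_trichotomy a n with h | h | h
    · constructor
      · rintro ⟨-, hb⟩
        rw [hrep, Nat.testBit_two_pow_add_gt h] at hb
        exact Or.inr ⟨h, hb⟩
      · rintro (rfl | ⟨-, hb⟩)
        · omega
        · refine ⟨by omega, ?_⟩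
          rw [hrep, Nat.testBit_two_pow_add_gt h]; exact hb
    · subst h
      have : i.testBit a = true := by
        rw [hrep, Nat.testBit_two_pow_add_eq, Nat.testBit_lt_two_pow hi']; rfl
      simp [this]
    · constructor
      · rintro ⟨ha, -⟩; omega
      · rintro (rfl | ⟨ha, -⟩) <;> omega
  rw [hins, Finset.card_insert_of_notMem]
  unfold S
  simp

lemma wt_zero_fun (n : ℕ) : wt n (fun _ => (0 : ZMod 2)) = 0 := by
  simp [wt]

lemma wt_g : ∀ n, ∀ i < 2^n, wt n (g n i) = 2^(S n i).card := by
  intro n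
  induction n with
  | zero =>
    intro i hi
    interval_cases i
    simp [wt, S, g, G, Finset.filter_singleton]
  | succ n ih =>
    intro i hi
    rcases lt_or_ge i (2^n) with h | h
    · rw [wt_split, S_low h]
      have e1 : wt n (fun c => g (n+1) i c) = wt n (g n i) :=
        wt_congr fun c hc => g_succ_low h hc
      have e2 : wt n (fun c => g (n+1) i (2^n + c)) = 0 := by
        rw [wt_congr fun c hc => g_succ_low_high h hc, wt_zero_fun]
      rw [e1, e2, ih i h, add_zero]
    · have hi' : i - 2^n < 2^n := by rw [pow_succ] at hi; omega
      rw [wt_split, S_high h hi]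
      have e1 : wt n (fun c => g (n+1) i c) = wt n (g n (i-2^n)) :=
        wt_congr fun c hc => g_succ_high_low h hi hc
      have e2 : wt n (fun c => g (n+1) i (2^n + c)) = wt n (g n (i-2^n)) :=
        wt_congr fun c hc => g_succ_high_high h hi hc
      rw [e1, e2, ih _ hi', pow_succ]
      ring

lemma main_aux : ∀ n, ∀ i < 2^n, ∀ H ⊆ Finset.Ico (i+1) (2^n),
    2^(S n i).card ≤ wt n (g n i + ∑ h ∈ H, g n h) := by
  intro n
  induction n with
  | zero =>
    intro i hi H hH
    have hi0 : i = 0 := by omega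
    have hHe : H = ∅ := by
      apply Finset.eq_empty_of_forall_notMem
      intro x hx
      have := hH hx
      rw [Finset.mem_Ico] at this
      omega
    subst hi0; subst hHe
    simp only [Finset.sum_empty, add_zero]
    simp [wt, S, g, G, Finset.filter_singleton]
  | succ n ih =>
    intro i hi H hH
    have hmem : ∀ h ∈ H, i + 1 ≤ h ∧ h < 2^(n+1) := by
      intro h hh
      have := hH hh
      rw [Finset.mem_Ico] at this
      exact this
    rcases lt_or_ge i (2^n) with h | h
    · -- case B : low row
      set H0 := H.filter (fun x => x < 2^n) with hH0
      set H1 := H.filter (fun x => ¬ x < 2^n) with hH1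
      set u := g n i + ∑ x ∈ H0, g n x with hu
      set w := (∑ x ∈ H1, g n (x - 2^n)) with hw
      have hlo : ∀ c < 2^n, (g (n+1) i + ∑ x ∈ H, g (n+1) x) c = (u + w) c := by
        intro c hc
        simp only [Pi.add_apply, Finset.sum_apply, hu, hw]
        rw [← Finset.sum_filter_add_sum_filter_not H (fun x => x < 2^n)
          (fun x => g (n+1) x c), g_succ_low h hc, add_assoc]
        congr 1
        congr 1
        · exact Finset.sum_congr rfl fun x hx => by
            rw [Finset.mem_filter] at hx
            exact g_succ_low hx.2 hc
        · exact Finset.sum_congr rfl fun x hx => by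
            rw [Finset.mem_filter] at hx
            obtain ⟨hx1, hx2⟩ := hmem x hx.1
            exact g_succ_high_low (by omega) hx2 hc
      have hhi : ∀ c < 2^n, (g (n+1) i + ∑ x ∈ H, g (n+1) x) (2^n + c) = w c := by
        intro c hc
        simp only [Pi.add_apply, Finset.sum_apply, hw]
        rw [← Finset.sum_filter_add_sum_filter_not H (fun x => x < 2^n)
          (fun x => g (n+1) x (2^n + c)), g_succ_low_high h hc]
        have z0 : ∑ x ∈ H0, g (n+1) x (2^n + c) = 0 := by
          apply Finset.sum_eq_zero
          intro x hx
          rw [Finset.mem_filter] at hx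
          exact g_succ_low_high hx.2 hc
        rw [z0]
        simp only [zero_add]
        exact Finset.sum_congr rfl fun x hx => by
          rw [Finset.mem_filter] at hx
          obtain ⟨hx1, hx2⟩ := hmem x hx.1
          exact g_succ_high_high (by omega) hx2 hc
      have hIH : 2^(S n i).card ≤ wt n u := by
        apply ih i h
        intro x hx
        rw [Finset.mem_filter] at hx
        obtain ⟨hx1, hx2⟩ := hmem x hx.1
        rw [Finset.mem_Ico]
        exact ⟨hx1, hx.2⟩
      calc 2^(S (n+1) i).card = 2^(S n i).card := by rw [S_low h]
        _ ≤ wt n u := hIH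
        _ ≤ wt n (u + w) + wt n w := wt_triangle n u w
        _ = wt n (fun c => (g (n+1) i + ∑ x ∈ H, g (n+1) x) c)
            + wt n (fun c => (g (n+1) i + ∑ x ∈ H, g (n+1) x) (2^n + c)) := by
            rw [wt_congr (fun c hc => (hlo c hc).symm) ,
               wt_congr (fun c hc => (hhi c hc).symm)]
        _ = wt (n+1) (g (n+1) i + ∑ x ∈ H, g (n+1) x) := (wt_split _ _).symm
    · -- case A : high row
      have hi' : i - 2^n < 2^n := by rw [pow_succ] at hi; omega
      set H' := H.image (fun x => x - 2^n) with hH'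
      have hsum : ∑ x ∈ H', g n x = ∑ x ∈ H, g n (x - 2^n) := by
        apply Finset.sum_image
        intro x hx y hy hxy
        obtain ⟨hx1, -⟩ := hmem x hx
        obtain ⟨hy1, -⟩ := hmem y hy
        simp only at hxy
        omega
      set u := g n (i - 2^n) + ∑ x ∈ H', g n x with hu
      have heq : ∀ c < 2^n, (g (n+1) i + ∑ x ∈ H, g (n+1) x) c = u c ∧
          (g (n+1) i + ∑ x ∈ H, g (n+1) x) (2^n + c) = u c := by
        intro c hc
        simp only [Pi.add_apply, Finset.sum_apply, hu, hsum]
        constructor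
        · rw [g_succ_high_low h hi hc]
          congr 1
          exact Finset.sum_congr rfl fun x hx => by
            obtain ⟨hx1, hx2⟩ := hmem x hx
            exact g_succ_high_low (by omega) hx2 hc
        · rw [g_succ_high_high h hi hc]
          congr 1
          exact Finset.sum_congr rfl fun x hx => by
            obtain ⟨hx1, hx2⟩ := hmem x hx
            exact g_succ_high_high (by omega) hx2 hc
      have hIH : 2^(S n (i - 2^n)).card ≤ wt n u := by
        apply ih _ hi'
        intro x hx
        rw [hH', Finset.mem_image] at hx
        obtain ⟨y, hy, rfl⟩ := hx
        obtain ⟨hy1, hy2⟩ := hmem y hy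
        rw [Finset.mem_Ico, pow_succ] at *
        omega
      calc 2^(S (n+1) i).card = 2 * 2^(S n (i - 2^n)).card := by
            rw [S_high h hi, pow_succ]; ring
        _ ≤ 2 * wt n u := by omega
        _ = wt n u + wt n u := by ring
        _ = wt n (fun c => (g (n+1) i + ∑ x ∈ H, g (n+1) x) c)
            + wt n (fun c => (g (n+1) i + ∑ x ∈ H, g (n+1) x) (2^n + c)) := by
            have e1 : wt n (fun c => (g (n+1) i + ∑ x ∈ H, g (n+1) x) c) = wt n u :=
              wt_congr fun c hc => (heq c hc).1
            have e2 : wt n (fun c => (g (n+1) i + ∑ x ∈ H, g (n+1) x) (2^n + c)) = wt n u :=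
              wt_congr fun c hc => (heq c hc).2
            rw [e1, e2]
        _ = wt (n+1) (g (n+1) i + ∑ x ∈ H, g (n+1) x) := (wt_split _ _).symm

/-- w(g_i ⊕ ⊕_{h∈H} g_h) ≥ w(g_i) = 2^{|S_i|} for any H ⊆ [i+1, N−1]. -/
theorem coset_weight_lower_bound (n : ℕ) (hn : 1 ≤ n) (i : ℕ) (hi : i < 2 ^ n)
    (H : Finset ℕ) (hH : H ⊆ Finset.Ico (i + 1) (2 ^ n)) :
    2 ^ (S n i).card ≤ wt n (g n i + ∑ h ∈ H, g n h) ∧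
      wt n (g n i) = 2 ^ (S n i).card :=
  ⟨main_aux n i hi H hH, wt_g n i hi⟩
end
end
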